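/- Fix an integer s ≥ 2 and a real number ζ with 0 < ζ < ζ_c. There exists a constant C > 0 (depending only on s and ζ) such that for every integer p ≥ 1, the Gram weight satisfies σ_p(ζ) ≤ C·p·M^{2p}. -/

import Mathlib

/-- Raney number `R_{s,p}(n) = (p/(s·n+p))·C(s·n+p, n)` as a real number. -/
noncomputable def raney (s p n : ℕ) : ℝ :=
  (p : ℝ) / (s * n + p) * (Nat.choose (s * n + p) n : ℝ)

/-- The analytic threshold `ζ_c = (s-1)^{s-1}/s^s`. -/
noncomputable def zetaC (s : ℕ) : ℝ := ((s : ℝ) - 1) ^ (s - 1) / (s : ℝ) ^ s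

/-- `M = s/(s-1)`. -/
noncomputable def Mconst (s : ℕ) : ℝ := (s : ℝ) / ((s : ℝ) - 1)

lemma sm1_pos (s : ℕ) (hs : 2 ≤ s) : (0:ℝ) < (s:ℝ) - 1 := by
  have : (2:ℝ) ≤ (s:ℝ) := by exact_mod_cast hs
  linarith

lemma zetaC_pos (s : ℕ) (hs : 2 ≤ s) : 0 < zetaC s := by
  have h1 := sm1_pos s hs
  have h2 : (0:ℝ) < (s:ℝ) := by positivity
  exact div_pos (pow_pos h1 _) (pow_pos h2 _)

lemma Mconst_pos (s : ℕ) (hs : 2 ≤ s) : 0 < Mconst s := by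
  have h1 := sm1_pos s hs
  have h2 : (0:ℝ) < (s:ℝ) := by positivity
  exact div_pos h2 h1

/-- Binomial bound: `C(n,k) x^k y^(n-k) ≤ (x+y)^n = 1` for `x+y = 1`. -/
lemma choose_mul_pow_le (n k : ℕ) (hk : k ≤ n) (x y : ℝ) (hx : 0 ≤ x) (hy : 0 ≤ y)
    (hxy : x + y = 1) : (Nat.choose n k : ℝ) * x ^ k * y ^ (n - k) ≤ 1 := by
  have hexp : (x + y) ^ n = ∑ i ∈ Finset.range (n + 1), x ^ i * y ^ (n - i) * (n.choose i) :=
    add_pow x y n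
  have hmem : k ∈ Finset.range (n + 1) := Finset.mem_range.mpr (Nat.lt_succ_of_le hk)
  have hle : x ^ k * y ^ (n - k) * (n.choose k : ℝ) ≤
      ∑ i ∈ Finset.range (n + 1), x ^ i * y ^ (n - i) * (n.choose i) := by
    apply Finset.single_le_sum (f := fun i => x ^ i * y ^ (n - i) * (n.choose i : ℝ)) _ hmem
    intro i _
    positivity
  calc (Nat.choose n k : ℝ) * x ^ k * y ^ (n - k)
      = x ^ k * y ^ (n - k) * (n.choose k : ℝ) := by ring
    _ ≤ (x + y) ^ n := by rw [hexp]; exact hle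
    _ = 1 := by rw [hxy, one_pow]

/-- Key bound: `C(s·m+p, m) ≤ M^p · (1/ζ_c)^m`. -/
lemma choose_le (s p m : ℕ) (hs : 2 ≤ s) :
    (Nat.choose (s * m + p) m : ℝ) ≤ Mconst s ^ p * (1 / zetaC s) ^ m := by
  have hs1 := sm1_pos s hs
  have hs0 : (0:ℝ) < (s:ℝ) := by positivity
  set x : ℝ := 1 / s with hxdef
  set y : ℝ := ((s:ℝ) - 1) / s with hydef
  have hx : 0 < x := by positivity
  have hy : 0 < y := div_pos hs1 hs0
  have hxy : x + y = 1 := by rw [hxdef, hydef]; field_simp; ring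
  have hk : m ≤ s * m + p := le_add_right (Nat.le_mul_of_pos_left m (by omega))
  have hsub : s * m + p - m = (s - 1) * m + p := by
    have h1 : (s - 1) * m = s * m - m := by rw [Nat.sub_mul, one_mul]
    have h2 : m ≤ s * m := Nat.le_mul_of_pos_left m (by omega)
    omega
  have hmain := choose_mul_pow_le (s * m + p) m hk x y hx.le hy.le hxy
  rw [hsub] at hmain
  have hpos : 0 < x ^ m * y ^ ((s - 1) * m + p) := by positivity
  have hCle : (Nat.choose (s * m + p) m : ℝ) ≤ (1/x) ^ m * (1/y) ^ ((s-1) * m + p) := by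
    rw [one_div x, one_div y, inv_pow, inv_pow, ← mul_inv, ← one_div, le_div_iff₀ hpos,
      ← mul_assoc]
    exact hmain
  have hxinv : 1/x = (s:ℝ) := by rw [hxdef, one_div_one_div]
  have hyinv : 1/y = Mconst s := by rw [hydef, one_div_div]; rfl
  have hss : (s:ℝ) ^ s = (s:ℝ) * (s:ℝ) ^ (s - 1) := by
    calc (s:ℝ) ^ s = (s:ℝ) ^ (s - 1 + 1) := by rw [Nat.sub_add_cancel (by omega : 1 ≤ s)]
      _ = (s:ℝ) * (s:ℝ) ^ (s - 1) := by rw [pow_succ]; ring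
  have hM1 : (s:ℝ) * Mconst s ^ (s - 1) = 1 / zetaC s := by
    rw [Mconst, zetaC, div_pow, one_div_div, hss]
    field_simp
  calc (Nat.choose (s * m + p) m : ℝ)
      ≤ (1/x) ^ m * (1/y) ^ ((s-1) * m + p) := hCle
    _ = Mconst s ^ p * (1 / zetaC s) ^ m := by
        rw [hxinv, hyinv, pow_add, ← hM1, mul_pow, ← pow_mul]
        ring

theorem stmt10 (s : ℕ) (hs : 2 ≤ s) (ζ : ℝ) (hζ0 : 0 < ζ) (hζ : ζ < zetaC s) :
    ∃ C : ℝ, 0 < C ∧ ∀ p : ℕ, 1 ≤ p →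
      (∑' m : ℕ, (((p : ℝ) + m * s) ^ 2 / p) * raney s p m ^ 2 * ζ ^ (2 * m))
        ≤ C * p * Mconst s ^ (2 * p) := by
  have hzc := zetaC_pos s hs
  have hM := Mconst_pos s hs
  set q : ℝ := ζ / zetaC s with hqdef
  have hq0 : 0 < q := div_pos hζ0 hzc
  have hq1 : q < 1 := (div_lt_one hzc).mpr hζ
  have hq2 : q ^ 2 < 1 := by nlinarith
  have hq2' : 0 ≤ q ^ 2 := by positivity
  have hq3 : 0 < 1 - q ^ 2 := by linarith
  refine ⟨1 / (1 - q ^ 2), by positivity, fun p hp => ?_⟩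
  have hp0 : (0:ℝ) < (p:ℝ) := by exact_mod_cast hp
  -- rewrite each term
  have hterm : ∀ m : ℕ, (((p : ℝ) + m * s) ^ 2 / p) * raney s p m ^ 2 * ζ ^ (2 * m)
      = (p:ℝ) * ((Nat.choose (s * m + p) m : ℝ) * ζ ^ m) ^ 2 := by
    intro m
    have hden' : (0:ℝ) < (s:ℝ) * m + p := by
      have : (0:ℝ) ≤ (s:ℝ) * m := by positivity
      linarith
    have hden : ((s:ℝ) * m + p) ≠ 0 := hden'.ne' 
    have h1 : (p : ℝ) + m * s = (s:ℝ) * m + p := by ring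
    rw [raney, h1, pow_mul]
    field_simp
    ring
  have hbound : ∀ m : ℕ, (p:ℝ) * ((Nat.choose (s * m + p) m : ℝ) * ζ ^ m) ^ 2
      ≤ (p:ℝ) * Mconst s ^ (2 * p) * (q ^ 2) ^ m := by
    intro m
    have hc := choose_le s p m hs
    have hc0 : (0:ℝ) ≤ (Nat.choose (s * m + p) m : ℝ) := Nat.cast_nonneg _
    have hz : (0:ℝ) ≤ ζ ^ m := by positivity
    have h2 : (Nat.choose (s * m + p) m : ℝ) * ζ ^ m
        ≤ Mconst s ^ p * (1 / zetaC s) ^ m * ζ ^ m :=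
      mul_le_mul_of_nonneg_right hc hz
    have h3 : Mconst s ^ p * (1 / zetaC s) ^ m * ζ ^ m = Mconst s ^ p * q ^ m := by
      rw [hqdef, div_eq_mul_one_div ζ (zetaC s), mul_pow]
      ring
    have h4 : (0:ℝ) ≤ (Nat.choose (s * m + p) m : ℝ) * ζ ^ m := by positivity
    have h5 : ((Nat.choose (s * m + p) m : ℝ) * ζ ^ m) ^ 2 ≤ (Mconst s ^ p * q ^ m) ^ 2 := by
      apply pow_le_pow_left₀ h4
      rw [← h3]; exact h2
    calc (p:ℝ) * ((Nat.choose (s * m + p) m : ℝ) * ζ ^ m) ^ 2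
        ≤ (p:ℝ) * (Mconst s ^ p * q ^ m) ^ 2 := by
          exact mul_le_mul_of_nonneg_left h5 hp0.le
      _ = (p:ℝ) * Mconst s ^ (2 * p) * (q ^ 2) ^ m := by
          rw [mul_pow, ← pow_mul, ← pow_mul, mul_comm p 2, mul_comm m 2]
          ring
  have hsumg : Summable (fun m : ℕ => (p:ℝ) * Mconst s ^ (2 * p) * (q ^ 2) ^ m) :=
    (summable_geometric_of_lt_one hq2' hq2).mul_left _
  have hsumf : Summable (fun m : ℕ =>
      (((p : ℝ) + m * s) ^ 2 / p) * raney s p m ^ 2 * ζ ^ (2 * m)) := by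
    apply Summable.of_nonneg_of_le _ _ hsumg
    · intro m; rw [hterm m]; positivity
    · intro m; rw [hterm m]; exact hbound m
  calc (∑' m : ℕ, (((p : ℝ) + m * s) ^ 2 / p) * raney s p m ^ 2 * ζ ^ (2 * m))
      ≤ ∑' m : ℕ, (p:ℝ) * Mconst s ^ (2 * p) * (q ^ 2) ^ m := by
        apply Summable.tsum_le_tsum _ hsumf hsumg
        intro m; rw [hterm m]; exact hbound m
    _ = (p:ℝ) * Mconst s ^ (2 * p) * (1 - q ^ 2)⁻¹ := by
        rw [tsum_mul_left, tsum_geometric_of_lt_one hq2' hq2]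
    _ = 1 / (1 - q ^ 2) * p * Mconst s ^ (2 * p) := by
        rw [one_div]; ring
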